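/- arXiv:math-ph/0609026 — 2 statements merged into one kernel-verified Lean document; each statement's English description precedes it below -/
import Mathlib

section
/- Let a, m, α > 0, ξ ∈ ℝ, and let f be the positive L²-normalized ground state of the operator H[a,m,α;ξ] (acting as -f'' + (t-ξ)²f - αf on ℝ₊ and (1/m)(-f'' + (t-ξ)²f) + aαf on ℝ₋, with f'(0₊) = (1/m)f'(0₋)). Then f(0) > 0; i.e., the ground state does not vanish at the interface. -/
open MeasureTheory Set Filter Topology

noncomputable section

/-- `B¹(ℝ₊)`-type regularity on the half line (smooth core):
`u`, `u'` and `t·u` are square integrable on `(0,∞)`. -/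
def MemB1p (u : ℝ → ℝ) : Prop :=
  Differentiable ℝ u ∧
  IntegrableOn (fun t => (u t)^2) (Ioi 0) ∧
  IntegrableOn (fun t => (deriv u t)^2) (Ioi 0) ∧
  IntegrableOn (fun t => t^2 * (u t)^2) (Ioi 0)

/-- The Robin quadratic form `q[γ,ξ]` of `-d²/dt² + (t-ξ)²` on `ℝ₊`. -/
def qRobin (γ ξ : ℝ) (u : ℝ → ℝ) : ℝ :=
  (∫ t in Ioi (0:ℝ), ((deriv u t)^2 + (t - ξ)^2 * (u t)^2)) + γ * (u 0)^2

/-- squared `L²(ℝ₊)` norm. -/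
def np (u : ℝ → ℝ) : ℝ := ∫ t in Ioi (0:ℝ), (u t)^2

/-- Lowest Robin eigenvalue `λ₁(γ,ξ)`, defined variationally. -/
def lambda1 (γ ξ : ℝ) : ℝ :=
  sInf {r : ℝ | ∃ u : ℝ → ℝ, MemB1p u ∧ np u ≠ 0 ∧ r = qRobin γ ξ u / np u}

/-- Lowest Neumann eigenvalue `λ₁^N(ξ)` (Robin with `γ = 0`). -/
def lambda1N (ξ : ℝ) : ℝ := lambda1 0 ξ

/-- Lowest Dirichlet eigenvalue `λ₁^D(ξ)`, defined variationally. -/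
def lambda1D (ξ : ℝ) : ℝ :=
  sInf {r : ℝ | ∃ u : ℝ → ℝ, MemB1p u ∧ u 0 = 0 ∧ np u ≠ 0 ∧ r = qRobin 0 ξ u / np u}

/-- The de Gennes constant `Θ₀ = inf_ξ λ₁^N(ξ)`. -/
def Theta0 : ℝ := sInf (Set.range lambda1N)

/-- `B¹(ℝ)`-type regularity on the whole line (smooth core). -/
def MemB1 (u : ℝ → ℝ) : Prop :=
  Differentiable ℝ u ∧
  Integrable (fun t => (u t)^2) ∧
  Integrable (fun t => (deriv u t)^2) ∧
  Integrable (fun t => t^2 * (u t)^2)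

/-- The interface quadratic form `Q[a,m,α;ξ]` on `B¹(ℝ)`. -/
def QI (a m α ξ : ℝ) (u : ℝ → ℝ) : ℝ :=
  (∫ t in Ioi (0:ℝ), ((deriv u t)^2 + (t - ξ)^2 * (u t)^2 - α * (u t)^2)) +
  ∫ t in Iio (0:ℝ), ((1/m) * ((deriv u t)^2 + (t - ξ)^2 * (u t)^2) + a * α * (u t)^2)

/-- squared `L²(ℝ)` norm. -/
def nR (u : ℝ → ℝ) : ℝ := ∫ t, (u t)^2

/-- Ground state energy `μ₁(a,m,α;ξ)` of the interface operator, defined variationally. -/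
def mu1 (a m α ξ : ℝ) : ℝ :=
  sInf {r : ℝ | ∃ u : ℝ → ℝ, MemB1 u ∧ nR u ≠ 0 ∧ r = QI a m α ξ u / nR u}

/-- Cauchy uniqueness for the second-order linear ODE `f'' = c·f` on the right half line:
if `f(0) = 0` and `f'(0+) = 0`, then `f ≡ 0` on `[0,∞)`. -/
lemma halfline_vanish (c f g : ℝ → ℝ) (hc : Continuous c) (hfc : Continuous f)
    (hfg : ∀ t : ℝ, 0 < t → HasDerivAt f (g t) t)
    (hODE : ∀ t : ℝ, 0 < t → HasDerivAt g (c t * f t) t)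
    (hf0 : f 0 = 0) (hg0 : Tendsto g (𝓝[>] (0:ℝ)) (𝓝 0)) :
    ∀ t : ℝ, 0 ≤ t → f t = 0 := by
  -- modified g, equal to g on (0,∞), with value 0 at 0
  set G : ℝ → ℝ := fun t => if 0 < t then g t else 0 with hG
  have hGg : ∀ t : ℝ, 0 < t → G t = g t := fun t ht => if_pos ht
  have hGev : ∀ t : ℝ, 0 < t → G =ᶠ[𝓝 t] g := by
    intro t ht
    filter_upwards [eventually_gt_nhds ht] with s hs using hGg s hs
  have hDG : ∀ t : ℝ, 0 < t → HasDerivAt G (c t * f t) t := fun t ht =>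
    (hODE t ht).congr_of_eventuallyEq (hGev t ht)
  -- derivative of f within [0,∞) at 0 is 0
  have hderiv_f : ∀ᶠ x in 𝓝[>] (0:ℝ), g x = deriv f x := by
    filter_upwards [self_mem_nhdsWithin] with x hx
    exact ((hfg x hx).deriv).symm
  have hdf0 : HasDerivWithinAt f 0 (Ici 0) 0 := by
    refine hasDerivWithinAt_Ici_of_tendsto_deriv
      (fun x hx => (hfg x hx).differentiableAt.differentiableWithinAt)
      hfc.continuousWithinAt self_mem_nhdsWithin (hg0.congr' hderiv_f)
  -- derivative of G within [0,∞) at 0 is 0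
  have hGdiff : ∀ x ∈ Ioi (0:ℝ), DifferentiableWithinAt ℝ G (Ioi 0) x :=
    fun x hx => (hDG x hx).differentiableAt.differentiableWithinAt
  have hGcont : ContinuousWithinAt G (Ioi 0) 0 := by
    have : Tendsto G (𝓝[>] (0:ℝ)) (𝓝 0) := by
      refine hg0.congr' ?_
      filter_upwards [self_mem_nhdsWithin] with x hx using (hGg x hx).symm
    simpa [ContinuousWithinAt, hG] using this
  have hderiv_G : Tendsto (fun x => deriv G x) (𝓝[>] (0:ℝ)) (𝓝 0) := by
    have h1 : Tendsto (fun x => c x * f x) (𝓝[>] (0:ℝ)) (𝓝 0) := by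
      have := ((hc.tendsto 0).mul (hfc.tendsto 0)).mono_left (nhdsWithin_le_nhds (s := Ioi 0))
      simpa [hf0] using this
    refine h1.congr' ?_
    filter_upwards [self_mem_nhdsWithin] with x hx using ((hDG x hx).deriv).symm
  have hdG0 : HasDerivWithinAt G 0 (Ici 0) 0 :=
    hasDerivWithinAt_Ici_of_tendsto_deriv hGdiff hGcont self_mem_nhdsWithin hderiv_G
  -- fix t₀ ≥ 0
  intro t₀ ht₀
  -- bound for c on [0, t₀]
  obtain ⟨C, hC⟩ := isCompact_Icc.exists_bound_of_continuousOn (s := Icc (0:ℝ) t₀)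
    hc.continuousOn
  have hC0 : 0 ≤ C := le_trans (norm_nonneg _) (hC 0 ⟨le_rfl, ht₀⟩)
  -- clamped coefficient
  set cl : ℝ → ℝ := fun t => c (min (max t 0) t₀) with hcl
  have hclmem : ∀ t : ℝ, min (max t 0) t₀ ∈ Icc (0:ℝ) t₀ := by
    intro t
    constructor
    · exact le_min (le_max_right _ _) ht₀
    · exact min_le_right _ _
  have hclbd : ∀ t : ℝ, |cl t| ≤ C := fun t => hC _ (hclmem t)
  have hcleq : ∀ t ∈ Icc (0:ℝ) t₀, cl t = c t := by
    intro t ht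
    simp only [hcl]
    rw [max_eq_left ht.1, min_eq_left ht.2]
  set K : NNReal := ⟨max 1 C, le_trans zero_le_one (le_max_left _ _)⟩ with hK
  set v : ℝ → ℝ × ℝ → ℝ × ℝ := fun t p => (p.2, cl t * p.1) with hv
  have hvlip : ∀ t : ℝ, LipschitzWith K (v t) := by
    intro t
    refine LipschitzWith.of_dist_le_mul fun p q => ?_
    rw [Prod.dist_eq, Prod.dist_eq]
    have hKc : (K : ℝ) = max 1 C := rfl
    simp only [hv, Real.dist_eq]
    have h1 : |p.2 - q.2| ≤ (K : ℝ) * max |p.1 - q.1| |p.2 - q.2| := by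
      calc |p.2 - q.2| ≤ max |p.1 - q.1| |p.2 - q.2| := le_max_right _ _
        _ = 1 * max |p.1 - q.1| |p.2 - q.2| := (one_mul _).symm
        _ ≤ (K : ℝ) * max |p.1 - q.1| |p.2 - q.2| := by
            apply mul_le_mul_of_nonneg_right _ (le_max_iff.2 (Or.inl (abs_nonneg _)))
            rw [hKc]; exact le_max_left _ _
    have h2 : |cl t * p.1 - cl t * q.1| ≤ (K : ℝ) * max |p.1 - q.1| |p.2 - q.2| := by
      rw [← mul_sub, abs_mul]
      calc |cl t| * |p.1 - q.1| ≤ C * |p.1 - q.1| :=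
            mul_le_mul_of_nonneg_right (hclbd t) (abs_nonneg _)
        _ ≤ (K : ℝ) * max |p.1 - q.1| |p.2 - q.2| := by
            apply mul_le_mul (by rw [hKc]; exact le_max_right _ _) (le_max_left _ _)
              (abs_nonneg _) (by rw [hKc]; positivity)
    exact max_le h1 h2
  -- the trajectory and the zero trajectory
  set F : ℝ → ℝ × ℝ := fun t => (f t, G t) with hF
  have hFcont : ContinuousOn F (Icc 0 t₀) := by
    intro t ht
    rcases eq_or_lt_of_le ht.1 with h | h
    · have : ContinuousWithinAt F (Ici 0) 0 := (hdf0.prodMk hdG0).continuousWithinAt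
      rw [← h]
      exact this.mono Icc_subset_Ici_self
    · exact (hfc.continuousAt.prodMk (hDG t h).differentiableAt.continuousAt).continuousWithinAt
  have hF' : ∀ t ∈ Ico (0:ℝ) t₀, HasDerivWithinAt F (v t (F t)) (Ici t) t := by
    intro t ht
    rcases eq_or_lt_of_le ht.1 with h | h
    · have : v t (F t) = ((0:ℝ), (0:ℝ)) := by
        simp only [hv, hF, ← h, hf0, mul_zero]
        have : G 0 = 0 := if_neg (lt_irrefl 0)
        rw [this]
      rw [this, ← h]
      exact hdf0.prodMk hdG0
    · have hd : HasDerivAt F (g t, c t * f t) t := (hfg t h).prodMk (hDG t h)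
      have : v t (F t) = (g t, c t * f t) := by
        simp only [hv, hF]
        rw [hGg t h, hcleq t ⟨ht.1, le_of_lt ht.2⟩]
      rw [this]
      exact hd.hasDerivWithinAt
  have hZ' : ∀ t ∈ Ico (0:ℝ) t₀,
      HasDerivWithinAt (fun _ : ℝ => ((0:ℝ), (0:ℝ))) (v t ((0:ℝ), (0:ℝ))) (Ici t) t := by
    intro t _
    have : v t ((0:ℝ), (0:ℝ)) = ((0:ℝ), (0:ℝ)) := by simp [hv]
    rw [this]
    exact hasDerivWithinAt_const _ _ _
  have heq : EqOn F (fun _ => ((0:ℝ), (0:ℝ))) (Icc 0 t₀) := by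
    refine ODE_solution_unique hvlip hFcont hF' continuousOn_const hZ' ?_
    simp only [hF]
    rw [hf0]
    have : G 0 = 0 := if_neg (lt_irrefl 0)
    rw [this]
  have := heq ⟨ht₀, le_rfl⟩
  simpa [hF] using congrArg Prod.fst this

/-- the (nonnegative, normalized) ground state of the interface
operator `H[a,m,α;ξ]` does not vanish at the interface: `f(0) > 0`.

`g` is the derivative of `f` away from `0`, with one-sided limits `dplus`, `dminus`
at `0` satisfying the transmission condition `dplus = (1/m) dminus`; the eigenvalue
equations hold on each half line with eigenvalue `μ = μ₁(a,m,α;ξ)`. -/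
theorem groundState_pos_at_interface (a m α ξ μ dplus dminus : ℝ) (f g : ℝ → ℝ)
    (ha : 0 < a) (hm : 0 < m) (hα : 0 < α)
    (hfc : Continuous f)
    (hfg : ∀ t : ℝ, t ≠ 0 → HasDerivAt f (g t) t)
    (hdp : Tendsto g (𝓝[>] (0:ℝ)) (𝓝 dplus))
    (hdm : Tendsto g (𝓝[<] (0:ℝ)) (𝓝 dminus))
    (htrans : dplus = (1/m) * dminus)
    (hODEp : ∀ t : ℝ, 0 < t → HasDerivAt g (((t - ξ)^2 - α - μ) * f t) t)
    (hODEm : ∀ t : ℝ, t < 0 → HasDerivAt g (((t - ξ)^2 + m * (a * α - μ)) * f t) t)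
    (hpos : ∀ t : ℝ, 0 ≤ f t)
    (hnorm : (∫ t : ℝ, (f t)^2) = 1)
    (hμ : μ = mu1 a m α ξ) :
    0 < f 0 := by
  by_contra hcon
  have h0 : f 0 = 0 := le_antisymm (not_lt.1 hcon) (hpos 0)
  -- one-sided derivatives of f at 0
  have hdfp : HasDerivWithinAt f dplus (Ici 0) 0 := by
    refine hasDerivWithinAt_Ici_of_tendsto_deriv (s := Ioi 0)
      (fun x hx => (hfg x (ne_of_gt hx)).differentiableAt.differentiableWithinAt)
      hfc.continuousWithinAt self_mem_nhdsWithin (hdp.congr' ?_)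
    filter_upwards [self_mem_nhdsWithin] with x hx using ((hfg x (ne_of_gt hx)).deriv).symm
  have hdfm : HasDerivWithinAt f dminus (Iic 0) 0 := by
    refine hasDerivWithinAt_Iic_of_tendsto_deriv (s := Iio 0)
      (fun x hx => (hfg x (ne_of_lt hx)).differentiableAt.differentiableWithinAt)
      hfc.continuousWithinAt self_mem_nhdsWithin (hdm.congr' ?_)
    filter_upwards [self_mem_nhdsWithin] with x hx using ((hfg x (ne_of_lt hx)).deriv).symm
  -- sign of one-sided derivatives via slopes
  have hslopep : Tendsto (slope f 0) (𝓝[>] (0:ℝ)) (𝓝 dplus) := by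
    have := hasDerivWithinAt_iff_tendsto_slope.1 hdfp
    rwa [Ici_sdiff_left] at this
  have hslopem : Tendsto (slope f 0) (𝓝[<] (0:ℝ)) (𝓝 dminus) := by
    have := hasDerivWithinAt_iff_tendsto_slope.1 hdfm
    rwa [Iic_sdiff_right] at this
  have hdpnn : 0 ≤ dplus := by
    refine ge_of_tendsto hslopep ?_
    filter_upwards [self_mem_nhdsWithin] with t ht
    have : slope f 0 t = f t / t := by simp [slope_def_field, h0]
    rw [this]
    exact div_nonneg (hpos t) (le_of_lt ht)
  have hdmnp : dminus ≤ 0 := by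
    refine le_of_tendsto hslopem ?_
    filter_upwards [self_mem_nhdsWithin] with t ht
    have : slope f 0 t = f t / t := by simp [slope_def_field, h0]
    rw [this]
    exact div_nonpos_of_nonneg_of_nonpos (hpos t) (le_of_lt ht)
  have h1m : 0 < 1/m := by positivity
  have hdp0 : dplus = 0 := le_antisymm
    (htrans ▸ mul_nonpos_of_nonneg_of_nonpos h1m.le hdmnp) hdpnn
  have hdm0 : dminus = 0 := by
    rw [hdp0] at htrans
    have : dminus = m * 0 := by field_simp at htrans; linarith
    simpa using this
  -- right half line vanishing
  have hright : ∀ t : ℝ, 0 ≤ t → f t = 0 := by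
    refine halfline_vanish (fun t => (t - ξ)^2 - α - μ) f g (by continuity) hfc
      (fun t ht => hfg t (ne_of_gt ht)) hODEp h0 ?_
    exact hdp0 ▸ hdp
  -- left half line vanishing, by reflection
  have hnegmap : Tendsto (fun t : ℝ => -t) (𝓝[>] (0:ℝ)) (𝓝[<] (0:ℝ)) := by
    refine tendsto_nhdsWithin_of_tendsto_nhds_of_eventually_within _ ?_ ?_
    · have := (continuous_neg.tendsto (0:ℝ)).mono_left (nhdsWithin_le_nhds (s := Ioi 0))
      simpa using this
    · filter_upwards [self_mem_nhdsWithin] with x hx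
      exact neg_lt_zero.2 (show (0:ℝ) < x from hx)
  have hleft : ∀ t : ℝ, 0 ≤ t → f (-t) = 0 := by
    refine halfline_vanish (fun t => (-t - ξ)^2 + m * (a * α - μ))
      (fun t => f (-t)) (fun t => -g (-t)) (by continuity) (by continuity)
      ?_ ?_ (by simpa using h0) ?_
    · intro t ht
      have h1 : HasDerivAt (fun t : ℝ => f (-t)) (g (-t) * (-1)) t :=
        (hfg (-t) (ne_of_lt (neg_lt_zero.2 ht))).comp t (hasDerivAt_neg t)
      simpa using h1
    · intro t ht
      have h1 : HasDerivAt (fun t : ℝ => g (-t))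
          ((((-t) - ξ)^2 + m * (a * α - μ)) * f (-t) * (-1)) t :=
        (hODEm (-t) (neg_lt_zero.2 ht)).comp t (hasDerivAt_neg t)
      have h2 := h1.neg
      exact h2.congr_deriv (by ring)
    · have := (hdm.comp hnegmap).neg
      rw [hdm0] at this
      simpa using this
  have hall : ∀ t : ℝ, f t = 0 := by
    intro t
    rcases le_total 0 t with h | h
    · exact hright t h
    · simpa using hleft (-t) (by linarith)
  have : (∫ t : ℝ, (f t)^2) = 0 := by simp [hall]
  rw [hnorm] at this
  exact one_ne_zero this
end
end

section
/- Let a, m > 0 with m > 1, and let α ∈ (Θ₀, 1) satisfy inf_{ξ∈ℝ} μ₁(a,m,α;ξ) = 0. Then for every β > α one has inf_{ξ∈ℝ} μ₁(a,m,β;ξ) < 0. Consequently there is at most one α > 0 with inf_ξ μ₁(a,m,α;ξ) = 0. -/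
open MeasureTheory Set Filter Topology

noncomputable section

section Test1
open MeasureTheory Set

def wfun : ℝ → ℝ := fun t => (1 + t^2)⁻¹

lemma one_add_sq_pos (t : ℝ) : 0 < 1 + t^2 := by positivity

lemma wfun_hasDerivAt (t : ℝ) :
    HasDerivAt wfun (-(2*t) / (1+t^2)^2) t := by
  have h := (hasDerivAt_id t).pow 2
  have h2 : HasDerivAt (fun x : ℝ => 1 + x^2) (2*t) t := by
    have h' := (hasDerivAt_const t (1:ℝ)).add (hasDerivAt_pow 2 t)
    have e : (2:ℝ)*t = 0 + ((2:ℕ):ℝ) * t^(2-1) := by norm_num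
    rw [e]; exact h'
  exact h2.inv (ne_of_gt (one_add_sq_pos t))

lemma wfun_differentiable : Differentiable ℝ wfun :=
  fun t => (wfun_hasDerivAt t).differentiableAt

lemma wfun_deriv (t : ℝ) : deriv wfun t = -(2*t) / (1+t^2)^2 :=
  (wfun_hasDerivAt t).deriv

lemma wfun_cont : Continuous wfun := wfun_differentiable.continuous

lemma memB1_wfun : MemB1 wfun := by
  have hb : Integrable (fun x : ℝ => (1 + x^2)⁻¹) := integrable_inv_one_add_sq
  refine ⟨wfun_differentiable, ?_, ?_, ?_⟩
  · apply hb.mono' ((wfun_cont.pow 2).aestronglyMeasurable)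
    filter_upwards with t
    have h1 := one_add_sq_pos t
    rw [Real.norm_eq_abs, abs_of_nonneg (sq_nonneg _)]
    show (1+t^2)⁻¹ ^ 2 ≤ (1+t^2)⁻¹
    rw [inv_pow]
    exact inv_anti₀ h1 (by nlinarith)
  · have hc : Continuous fun t : ℝ => (deriv wfun t)^2 := by
      have : (fun t : ℝ => (deriv wfun t)^2) = fun t => (-(2*t) / (1+t^2)^2)^2 := by
        funext t; rw [wfun_deriv]
      rw [this]
      exact ((continuous_const.mul continuous_id).neg.div
        ((continuous_const.add (continuous_id.pow 2)).pow 2)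
        (fun t => pow_ne_zero 2 (ne_of_gt (one_add_sq_pos t)))).pow 2
    apply (hb.const_mul 4).mono' hc.aestronglyMeasurable
    filter_upwards with t
    have h1 := one_add_sq_pos t
    rw [Real.norm_eq_abs, abs_of_nonneg (by positivity), wfun_deriv, div_pow,
      div_le_iff₀ (by positivity)]
    have h2 : (0:ℝ) ≤ t^2*(1+t^2) := by positivity
    have h3 : (1:ℝ) ≤ 1+t^2 := by nlinarith [sq_nonneg t]
    have h4 : (1+t^2)^2 ≤ ((1+t^2)^2)^2 := by nlinarith [sq_nonneg t, sq_nonneg (t^2)]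
    calc (-(2*t))^2 = 4*t^2 := by ring
    _ ≤ 4*(1+t^2) := by nlinarith
    _ = 4 * (1+t^2)⁻¹ * (1+t^2)^2 := by field_simp
    _ ≤ 4 * (1+t^2)⁻¹ * ((1+t^2)^2)^2 := by
        have : (0:ℝ) ≤ 4*(1+t^2)⁻¹ := by positivity
        nlinarith [mul_le_mul_of_nonneg_left h4 this]
  · apply hb.mono'
      (((continuous_id.pow 2).mul (wfun_cont.pow 2)).aestronglyMeasurable)
    filter_upwards with t
    have h1 := one_add_sq_pos t
    rw [Real.norm_eq_abs, abs_of_nonneg (mul_nonneg (sq_nonneg _) (sq_nonneg _))]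
    show t^2 * ((1+t^2)⁻¹)^2 ≤ (1+t^2)⁻¹
    have h5 : t^2 ≤ 1+t^2 := by nlinarith [sq_nonneg t]
    have h6 : (0:ℝ) ≤ ((1+t^2)⁻¹)^2 := by positivity
    calc t^2*((1+t^2)⁻¹)^2 ≤ (1+t^2)*((1+t^2)⁻¹)^2 := mul_le_mul_of_nonneg_right h5 h6
    _ = (1+t^2)⁻¹ := by field_simp

lemma nR_wfun_pos : 0 < nR wfun := by
  rw [nR]
  rw [integral_pos_iff_support_of_nonneg_ae]
  · show 0 < volume (Function.support fun t => (wfun t)^2)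
    have : (Function.support fun t => (wfun t)^2) = univ := by
      ext t; simp [wfun, Function.mem_support]
      positivity
    rw [this]; simp
  · filter_upwards with t; positivity
  · exact memB1_wfun.2.1

end Test1
section Test2
open MeasureTheory Set

lemma integrable_shift_sq {u : ℝ → ℝ} {μ : Measure ℝ} (hc : Continuous u)
    (h2 : Integrable (fun t => (u t)^2) μ) (ht2 : Integrable (fun t => t^2*(u t)^2) μ)
    (ξ : ℝ) : Integrable (fun t => (t-ξ)^2*(u t)^2) μ := by
  have hg : Integrable (fun t => 2*(t^2*(u t)^2) + (2*ξ^2)*(u t)^2) μ :=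
    (ht2.const_mul 2).add (h2.const_mul (2*ξ^2))
  apply hg.mono'
    ((((continuous_id.sub continuous_const).pow 2).mul (hc.pow 2)).aestronglyMeasurable)
  filter_upwards with t
  rw [Real.norm_eq_abs, abs_of_nonneg (mul_nonneg (sq_nonneg _) (sq_nonneg _))]
  show (t-ξ)^2*(u t)^2 ≤ 2*(t^2*(u t)^2) + (2*ξ^2)*(u t)^2
  nlinarith [mul_nonneg (sq_nonneg (t+ξ)) (sq_nonneg (u t)), sq_nonneg (u t)]

lemma cauchy_schwarz_Ioc {f : ℝ → ℝ} {t s : ℝ} (hts : t < s)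
    (hmeas : AEStronglyMeasurable f (volume.restrict (Ioc t s)))
    (hf2 : IntegrableOn (fun x => (f x)^2) (Ioc t s)) :
    (∫ x in Ioc t s, f x)^2 ≤ (s-t) * ∫ x in Ioc t s, (f x)^2 := by
  have hvol : (volume (Ioc t s)).toReal = s - t := by
    rw [Real.volume_Ioc, ENNReal.toReal_ofReal (by linarith)]
  have hfin : volume (Ioc t s) < ⊤ := by rw [Real.volume_Ioc]; exact ENNReal.ofReal_lt_top
  have hone : IntegrableOn (fun _ => (1:ℝ)) (Ioc t s) := integrableOn_const hfin.ne
  have hf1 : IntegrableOn f (Ioc t s) := by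
    apply ((hf2.add hone).const_mul (1/2)).mono' hmeas
    filter_upwards with x
    simp only [Pi.add_apply]
    rw [Real.norm_eq_abs]
    nlinarith [sq_nonneg (|f x| - 1), abs_nonneg (f x), sq_abs (f x)]
  set Iv := ∫ x in Ioc t s, f x with hIv
  set Jv := ∫ x in Ioc t s, (f x)^2 with hJv
  have hnn : 0 ≤ ∫ x in Ioc t s, ((s-t)*f x - Iv)^2 :=
    setIntegral_nonneg measurableSet_Ioc (fun _ _ => sq_nonneg _)
  have hexp : (fun x => ((s-t)*f x - Iv)^2)
      = fun x => ((s-t)^2*(f x)^2 - (2*(s-t)*Iv)*(f x)) + Iv^2 := by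
    funext x; ring
  have hconst : IntegrableOn (fun _ => Iv^2) (Ioc t s) := integrableOn_const hfin.ne
  have hint : ∫ x in Ioc t s, ((s-t)*f x - Iv)^2
      = ((s-t)^2*Jv - (2*(s-t)*Iv)*Iv) + (s-t)*Iv^2 := by
    have i2 : IntegrableOn (fun x => (s-t)^2*(f x)^2) (Ioc t s) := hf2.const_mul _
    have i3 : IntegrableOn (fun x => (2*(s-t)*Iv)*(f x)) (Ioc t s) := hf1.const_mul _
    have i1 : IntegrableOn (fun x => (s-t)^2*(f x)^2 - (2*(s-t)*Iv)*(f x)) (Ioc t s) :=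
      i2.sub i3
    rw [hexp, integral_add i1 hconst, integral_sub i2 i3,
      MeasureTheory.integral_const_mul, MeasureTheory.integral_const_mul, setIntegral_const, measureReal_def, hvol]
    simp only [smul_eq_mul]
    try ring
  rw [hint] at hnn
  nlinarith [hnn, sub_pos.2 hts]

end Test2
section Test3
open MeasureTheory Set

lemma halfline_bound (u : ℝ → ℝ) (hd : Differentiable ℝ u)
    (h2 : IntegrableOn (fun t => (u t)^2) (Ioi 0))
    (hd2 : IntegrableOn (fun t => (deriv u t)^2) (Ioi 0))
    (ht2 : IntegrableOn (fun t => t^2*(u t)^2) (Ioi 0)) (ξ : ℝ) :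
    (1/12) * (∫ t in Ioi (0:ℝ), (u t)^2) ≤
      ∫ t in Ioi (0:ℝ), ((deriv u t)^2 + (t-ξ)^2*(u t)^2) := by
  have hc := hd.continuous
  have hV_int : IntegrableOn (fun t => (t-ξ)^2*(u t)^2) (Ioi 0) :=
    integrable_shift_sq hc h2 ht2 ξ
  set D := ∫ t in Ioi (0:ℝ), (deriv u t)^2 with hD
  set V := ∫ t in Ioi (0:ℝ), (t-ξ)^2*(u t)^2 with hV
  have hsum : ∫ t in Ioi (0:ℝ), ((deriv u t)^2 + (t-ξ)^2*(u t)^2) = D + V :=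
    integral_add hd2 hV_int
  have hD0 : 0 ≤ D := setIntegral_nonneg measurableSet_Ioi (fun t _ => sq_nonneg _)
  have hV0 : 0 ≤ V := setIntegral_nonneg measurableSet_Ioi (fun t _ => by positivity)
  set M := max ξ 0 with hM
  set S : Set ℝ := Ioo (M + 1/2) (M + 3/2) with hS
  have hSsub : S ⊆ Ioi 0 := by
    intro s hs
    simp only [hS, mem_Ioo] at hs
    have := le_max_right ξ 0
    exact mem_Ioi.2 (by linarith [hs.1])
  have hSvol : volume S = ENNReal.ofReal 1 := by
    rw [hS, Real.volume_Ioo]; norm_num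
  have hu2nonneg : (fun _ => (0:ℝ)) ≤ᵐ[volume.restrict (Ioi (0:ℝ))] fun t => (t-ξ)^2*(u t)^2 := by
    filter_upwards with t; positivity
  have hd2nonneg : (fun _ => (0:ℝ)) ≤ᵐ[volume.restrict (Ioi (0:ℝ))] fun t => (deriv u t)^2 := by
    filter_upwards with t; positivity
  have hSkey : ∫ s in S, (u s)^2 ≤ 4*V := by
    have step : ∫ s in S, (u s)^2 ≤ ∫ s in S, 4*((s-ξ)^2*(u s)^2) := by
      apply setIntegral_mono_on (h2.mono_set hSsub)
        ((hV_int.mono_set hSsub).const_mul 4) measurableSet_Ioo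
      intro s hs
      simp only [hS, mem_Ioo] at hs
      have h1 : ξ + 1/2 ≤ s := by
        have := le_max_left ξ 0; linarith [hs.1]
      have h14 : (1:ℝ)/4 ≤ (s-ξ)^2 := by nlinarith
      nlinarith [sq_nonneg (u s)]
    have step2 : ∫ s in S, 4*((s-ξ)^2*(u s)^2) ≤ 4*V := by
      rw [MeasureTheory.integral_const_mul]
      have := setIntegral_mono_set hV_int hu2nonneg (HasSubset.Subset.eventuallyLE hSsub)
      linarith
    linarith
  -- pointwise bound on the bad interval
  have key_t : ∀ t ∈ Ioi (0:ℝ) ∩ Ioo (ξ-1/2) (ξ+1/2), (u t)^2 ≤ 8*V + 4*D := by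
    intro t ht
    obtain ⟨ht0, ht1⟩ := ht
    simp only [mem_Ioo] at ht1
    have ht0' : (0:ℝ) < t := ht0
    have hpt : ∀ s ∈ S, (u t)^2 ≤ 2*(u s)^2 + 4*D := by
      intro s hs
      simp only [hS, mem_Ioo] at hs
      have hMξ : ξ ≤ M := le_max_left ξ 0
      have hts : t < s := by linarith [ht1.2, hs.1]
      have hst2 : s - t ≤ 2 := by
        rcases le_total ξ 0 with h | h
        · have hM0 : M = 0 := max_eq_right h
          rw [hM0] at hs
          linarith [hs.2]
        · have hM0 : M = ξ := max_eq_left h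
          rw [hM0] at hs
          linarith [hs.2, ht1.1]
      have hIocsub : Ioc t s ⊆ Ioi 0 := fun x hx => lt_trans ht0' hx.1
      have hd2loc : IntegrableOn (fun x => (deriv u x)^2) (Ioc t s) := hd2.mono_set hIocsub
      have hdmeas : AEStronglyMeasurable (deriv u) (volume.restrict (Ioc t s)) :=
        (measurable_deriv u).aestronglyMeasurable
      have hfin : volume (Ioc t s) < ⊤ := by rw [Real.volume_Ioc]; exact ENNReal.ofReal_lt_top
      have hone : IntegrableOn (fun _ => (1:ℝ)) (Ioc t s) := integrableOn_const hfin.ne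
      have hdloc : IntegrableOn (deriv u) (Ioc t s) := by
        apply ((hd2loc.add hone).const_mul (1/2)).mono' hdmeas
        filter_upwards with x
        simp only [Pi.add_apply]
        rw [Real.norm_eq_abs]
        nlinarith [sq_nonneg (|deriv u x| - 1), abs_nonneg (deriv u x), sq_abs (deriv u x)]
      have hFTC : ∫ x in t..s, deriv u x = u s - u t := by
        apply intervalIntegral.integral_deriv_eq_sub (fun x _ => hd x)
        rw [intervalIntegrable_iff, uIoc_of_le hts.le]
        exact hdloc
      have hI : u s - u t = ∫ x in Ioc t s, deriv u x := by
        rw [← hFTC, intervalIntegral.integral_of_le hts.le]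
      have hCS := cauchy_schwarz_Ioc hts hdmeas hd2loc
      have hJD : ∫ x in Ioc t s, (deriv u x)^2 ≤ D :=
        setIntegral_mono_set hd2 hd2nonneg (HasSubset.Subset.eventuallyLE hIocsub)
      have hJ0 : 0 ≤ ∫ x in Ioc t s, (deriv u x)^2 :=
        setIntegral_nonneg measurableSet_Ioc (fun _ _ => sq_nonneg _)
      have hdiff : (u s - u t)^2 ≤ 2*D := by
        rw [hI]
        nlinarith [hCS, sub_pos.2 hts]
      nlinarith [sq_nonneg (u t - 2*u s)]
    -- average over s ∈ S
    have hSfin : volume S < ⊤ := by rw [hSvol]; exact ENNReal.ofReal_lt_top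
    have hc1 : IntegrableOn (fun _ : ℝ => (u t)^2) S := integrableOn_const hSfin.ne
    have hc2 : IntegrableOn (fun s => 2*(u s)^2 + 4*D) S := by
      exact ((h2.mono_set hSsub).const_mul 2).add (integrableOn_const hSfin.ne)
    have h1 : ∫ s in S, (u t)^2 ≤ ∫ s in S, (2*(u s)^2 + 4*D) :=
      setIntegral_mono_on hc1 hc2 measurableSet_Ioo hpt
    have h2' : ∫ s in S, (u t)^2 = (u t)^2 := by
      rw [setIntegral_const]; simp [measureReal_def, hSvol]
    have h3 : ∫ s in S, (2*(u s)^2 + 4*D) = 2*(∫ s in S, (u s)^2) + 4*D := by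
      rw [integral_add ((h2.mono_set hSsub).const_mul 2) (integrableOn_const hSfin.ne),
        MeasureTheory.integral_const_mul, setIntegral_const]
      simp [measureReal_def, hSvol]
    rw [h2'] at h1
    rw [h3] at h1
    linarith [hSkey]
  -- split the integral
  set B : Set ℝ := Ioo (ξ-1/2) (ξ+1/2) with hB
  have hsplit : ∫ t in Ioi (0:ℝ), (u t)^2
      = (∫ t in Ioi (0:ℝ) ∩ B, (u t)^2) + ∫ t in Ioi (0:ℝ) \ B, (u t)^2 :=
    (integral_inter_add_diff measurableSet_Ioo h2).symm
  have hBvol : (volume (Ioi (0:ℝ) ∩ B)).toReal ≤ 1 := by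
    have h := measure_mono (μ := volume) (inter_subset_right : Ioi (0:ℝ) ∩ B ⊆ B)
    rw [hB, Real.volume_Ioo] at h
    have : ξ + 1/2 - (ξ - 1/2) = 1 := by ring
    rw [this] at h
    exact ENNReal.toReal_le_of_le_ofReal one_pos.le h
  have hBfin : volume (Ioi (0:ℝ) ∩ B) < ⊤ :=
    lt_of_le_of_lt (measure_mono inter_subset_right)
      (by rw [hB, Real.volume_Ioo]; exact ENNReal.ofReal_lt_top)
  have hB1 : ∫ t in Ioi (0:ℝ) ∩ B, (u t)^2 ≤ 8*V + 4*D := by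
    have hle : ∫ t in Ioi (0:ℝ) ∩ B, (u t)^2 ≤ ∫ _t in Ioi (0:ℝ) ∩ B, (8*V + 4*D) :=
      setIntegral_mono_on (h2.mono_set inter_subset_left)
        (integrableOn_const hBfin.ne) (measurableSet_Ioi.inter measurableSet_Ioo) key_t
    rw [setIntegral_const, smul_eq_mul] at hle
    have h84 : 0 ≤ 8*V + 4*D := by linarith
    calc ∫ t in Ioi (0:ℝ) ∩ B, (u t)^2 ≤ (volume (Ioi (0:ℝ) ∩ B)).toReal * (8*V + 4*D) := hle
    _ ≤ 1 * (8*V + 4*D) := mul_le_mul_of_nonneg_right hBvol h84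
    _ = 8*V + 4*D := by ring
  have hB2 : ∫ t in Ioi (0:ℝ) \ B, (u t)^2 ≤ 4*V := by
    have hsub : Ioi (0:ℝ) \ B ⊆ Ioi 0 := diff_subset
    have step : ∫ t in Ioi (0:ℝ) \ B, (u t)^2 ≤ ∫ t in Ioi (0:ℝ) \ B, 4*((t-ξ)^2*(u t)^2) := by
      apply setIntegral_mono_on (h2.mono_set hsub) ((hV_int.mono_set hsub).const_mul 4)
        (measurableSet_Ioi.diff measurableSet_Ioo)
      intro x hx
      have hx2 : x ∉ B := hx.2
      rw [hB, mem_Ioo] at hx2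
      push_neg at hx2
      have h14 : (1:ℝ)/4 ≤ (x-ξ)^2 := by
        rcases lt_or_ge (ξ-1/2) x with h | h
        · have := hx2 h; nlinarith
        · nlinarith
      nlinarith [sq_nonneg (u x)]
    have step2 : ∫ t in Ioi (0:ℝ) \ B, 4*((t-ξ)^2*(u t)^2) ≤ 4*V := by
      rw [MeasureTheory.integral_const_mul]
      have := setIntegral_mono_set hV_int hu2nonneg (HasSubset.Subset.eventuallyLE hsub)
      linarith
    linarith
  rw [hsum]
  linarith [hsplit, hB1, hB2]

end Test3
section Test4
open MeasureTheory Set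

variable {u : ℝ → ℝ} {a m γ ξ α' β : ℝ}

lemma P_nonneg (u : ℝ → ℝ) : 0 ≤ ∫ t in Ioi (0:ℝ), (u t)^2 :=
  setIntegral_nonneg measurableSet_Ioi (fun _ _ => sq_nonneg _)

lemma N_nonneg (u : ℝ → ℝ) : 0 ≤ ∫ t in Iio (0:ℝ), (u t)^2 :=
  setIntegral_nonneg measurableSet_Iio (fun _ _ => sq_nonneg _)

lemma nR_eq (hu : MemB1 u) :
    nR u = (∫ t in Iio (0:ℝ), (u t)^2) + ∫ t in Ioi (0:ℝ), (u t)^2 := by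
  rw [nR, ← intervalIntegral.integral_Iic_add_Ioi (hu.2.1.integrableOn) (hu.2.1.integrableOn),
    setIntegral_congr_set (Iio_ae_eq_Iic (a := (0:ℝ)))]

lemma intX (hu : MemB1 u) (ξ : ℝ) :
    Integrable (fun t => (deriv u t)^2 + (t-ξ)^2*(u t)^2) :=
  hu.2.2.1.add (integrable_shift_sq hu.1.continuous hu.2.1 hu.2.2.2 ξ)

lemma intX_nonneg (s : Set ℝ) (hs : MeasurableSet s) :
    0 ≤ ∫ t in s, ((deriv u t)^2 + (t-ξ)^2*(u t)^2) :=
  setIntegral_nonneg hs (fun t _ => by positivity)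

lemma QI_eq (hu : MemB1 u) :
    QI a m γ ξ u =
      ((∫ t in Ioi (0:ℝ), ((deriv u t)^2 + (t-ξ)^2*(u t)^2))
        - γ * ∫ t in Ioi (0:ℝ), (u t)^2)
      + ((1/m) * (∫ t in Iio (0:ℝ), ((deriv u t)^2 + (t-ξ)^2*(u t)^2))
        + (a*γ) * ∫ t in Iio (0:ℝ), (u t)^2) := by
  rw [QI]
  congr 1
  · rw [← MeasureTheory.integral_const_mul,
      ← integral_sub ((intX hu ξ).integrableOn) ((hu.2.1.integrableOn).const_mul γ)]
  · rw [← MeasureTheory.integral_const_mul, ← MeasureTheory.integral_const_mul,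
      ← integral_add (((intX hu ξ).integrableOn).const_mul (1/m))
        ((hu.2.1.integrableOn).const_mul (a*γ))]

lemma QI_diff (hu : MemB1 u) :
    QI a m β ξ u = QI a m α' ξ u
      - (β - α') * (∫ t in Ioi (0:ℝ), (u t)^2)
      + a*(β - α') * ∫ t in Iio (0:ℝ), (u t)^2 := by
  rw [QI_eq (γ := β) hu, QI_eq (γ := α') hu]; ring

lemma QI_ge (hu : MemB1 u) (ha : 0 ≤ a) (hm : 0 < m) (hγ : 0 ≤ γ) :
    (1/12 - γ) * (∫ t in Ioi (0:ℝ), (u t)^2)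
      + a*γ * (∫ t in Iio (0:ℝ), (u t)^2) ≤ QI a m γ ξ u := by
  rw [QI_eq hu]
  have h1 := halfline_bound u hu.1 (hu.2.1.integrableOn) (hu.2.2.1.integrableOn)
    (hu.2.2.2.integrableOn) ξ
  have h2 : 0 ≤ (1/m) * ∫ t in Iio (0:ℝ), ((deriv u t)^2 + (t-ξ)^2*(u t)^2) := by
    have := intX_nonneg (u := u) (ξ := ξ) (Iio 0) measurableSet_Iio
    positivity
  nlinarith [P_nonneg u]

lemma quotient_ge (hu : MemB1 u) (ha : 0 ≤ a) (hm : 0 < m) (hγ : 0 ≤ γ)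
    (hn : nR u ≠ 0) : -γ ≤ QI a m γ ξ u / nR u := by
  have hPN := nR_eq hu
  have hnpos : 0 < nR u := lt_of_le_of_ne (by rw [hPN]; linarith [P_nonneg u, N_nonneg u]) (Ne.symm hn)
  rw [le_div_iff₀ hnpos]
  have := QI_ge (a := a) (m := m) (γ := γ) (ξ := ξ) hu ha hm hγ
  nlinarith [P_nonneg u, N_nonneg u, mul_nonneg (mul_nonneg ha hγ) (N_nonneg u)]

lemma mu1_ge (ha : 0 ≤ a) (hm : 0 < m) (hγ : 0 ≤ γ) (ξ : ℝ) : -γ ≤ mu1 a m γ ξ := by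
  rw [mu1]
  rcases Set.eq_empty_or_nonempty
    {r : ℝ | ∃ u : ℝ → ℝ, MemB1 u ∧ nR u ≠ 0 ∧ r = QI a m γ ξ u / nR u} with h | h
  · rw [h, Real.sInf_empty]; linarith
  · apply le_csInf h
    rintro r ⟨u, hu, hn, rfl⟩
    exact quotient_ge hu ha hm hγ hn

lemma bddBelow_S (ha : 0 ≤ a) (hm : 0 < m) (hγ : 0 ≤ γ) :
    BddBelow {r : ℝ | ∃ u : ℝ → ℝ, MemB1 u ∧ nR u ≠ 0 ∧ r = QI a m γ ξ u / nR u} := by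
  refine ⟨-γ, ?_⟩
  rintro r ⟨u, hu, hn, rfl⟩
  exact quotient_ge hu ha hm hγ hn

lemma S_nonempty (a m γ ξ : ℝ) :
    Set.Nonempty {r : ℝ | ∃ u : ℝ → ℝ, MemB1 u ∧ nR u ≠ 0 ∧ r = QI a m γ ξ u / nR u} :=
  ⟨QI a m γ ξ wfun / nR wfun, wfun, memB1_wfun, ne_of_gt nR_wfun_pos, rfl⟩

lemma bddBelow_range_mu1 (ha : 0 ≤ a) (hm : 0 < m) (hγ : 0 ≤ γ) :
    BddBelow (Set.range (mu1 a m γ)) := by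
  refine ⟨-γ, ?_⟩
  rintro r ⟨ξ, rfl⟩
  exact mu1_ge ha hm hγ ξ

end Test4
section Test5
open MeasureTheory Set
set_option maxHeartbeats 2000000

lemma core_lemma (a m α' β : ℝ) (ha : 0 < a) (hm : 0 < m) (hα' : 0 < α') (hβ : α' < β)
    (h0 : sInf (Set.range (mu1 a m α')) = 0) :
    sInf (Set.range (mu1 a m β)) < 0 := by
  set c : ℝ := 1/12 with hcdef
  have hc0 : (0:ℝ) < c := by norm_num [hcdef]
  set d : ℝ := β - α' with hddef
  have hd0 : (0:ℝ) < d := by simp [hddef]; linarith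
  set ε : ℝ := min (a*α'/2) (min (a*c/(2*(a+1))) (d*a*c/(8*α'*(1+a)))) with hεdef
  have hε0 : 0 < ε := by
    apply lt_min (by positivity) (lt_min (by positivity) (by positivity))
  have hε1 : ε ≤ a*α'/2 := min_le_left _ _
  have hε2 : ε ≤ a*c/(2*(a+1)) := le_trans (min_le_right _ _) (min_le_left _ _)
  have hε3 : ε ≤ d*a*c/(8*α'*(1+a)) := le_trans (min_le_right _ _) (min_le_right _ _)
  -- extract a near-minimizer
  have hrange : sInf (Set.range (mu1 a m α')) < ε := by rw [h0]; exact hε0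
  obtain ⟨v, ⟨ξ, rfl⟩, hvlt⟩ := (csInf_lt_iff
    (bddBelow_range_mu1 ha.le hm hα'.le) (Set.range_nonempty _)).1 hrange
  rw [mu1] at hvlt
  obtain ⟨r, ⟨u, hu, hn, rfl⟩, hrlt⟩ := (csInf_lt_iff
    (bddBelow_S ha.le hm hα'.le) (S_nonempty a m α' ξ)).1 hvlt
  set P := ∫ t in Ioi (0:ℝ), (u t)^2 with hPdef
  set N := ∫ t in Iio (0:ℝ), (u t)^2 with hNdef
  have hP : 0 ≤ P := P_nonneg u
  have hN : 0 ≤ N := N_nonneg u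
  have hPN : nR u = N + P := nR_eq hu
  have hnpos : 0 < nR u := lt_of_le_of_ne (by rw [hPN]; linarith) (Ne.symm hn)
  have hQ : QI a m α' ξ u < ε * (N + P) := by
    rw [← hPN]
    calc QI a m α' ξ u = (QI a m α' ξ u / nR u) * nR u := by field_simp
    _ < ε * nR u := by exact mul_lt_mul_of_pos_right hrlt hnpos
  have hlow := QI_ge (a := a) (m := m) (γ := α') (ξ := ξ) hu ha.le hm hα'.le
  have h1 : (c - α')*P + a*α'*N < ε*(N+P) := by
    rw [hcdef]
    calc (1/12 - α')*P + a*α'*N ≤ QI a m α' ξ u := hlow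
    _ < ε*(N+P) := hQ
  -- arithmetic to get d*(P - a*N) > ε*(N+P)
  have hεa : ε < a*α' := by nlinarith [mul_pos ha hα']
  have s1 : (a*α' - ε)*N < (α' + ε - c)*P := by nlinarith [h1]
  have s2 : a*((a*α' - ε)*N) < a*((α' + ε - c)*P) := by
    have := mul_lt_mul_of_pos_left s1 ha; linarith
  have hε2' : ε*(1+a) ≤ a*c/2 := by
    have h := mul_le_mul_of_nonneg_right hε2 (show (0:ℝ) ≤ 1+a by linarith)
    have e : (a*c/(2*(a+1)))*(1+a) = a*c/2 := by field_simp; ring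
    linarith [e ▸ h]
  have key2 : P*(a*c - ε*(1+a)) < (P - a*N)*(a*α' - ε) := by nlinarith [s2]
  have s5 : P*(a*c/2) ≤ P*(a*c - ε*(1+a)) :=
    mul_le_mul_of_nonneg_left (by linarith) hP
  have h7 : 0 < (P - a*N)*(a*α' - ε) :=
    lt_of_le_of_lt (le_trans (by positivity) s5) key2
  have hPaN : 0 < P - a*N := by nlinarith [h7, hεa]
  have s6 : (P - a*N)*(a*α') > P*(a*c/2) := by nlinarith [mul_nonneg hPaN.le hε0.le]
  have s8 : α'*(P - a*N) > P*(c/2) := by nlinarith [s6, ha]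
  have f1 : 0 ≤ N*(a*α'/2 - ε) := mul_nonneg hN (by linarith)
  have f2 : 0 ≤ P*(a*α'/2 - ε + c) := mul_nonneg hP (by linarith)
  have s7' : a*N*α' < (2+a)*P*α' := by nlinarith [s1, f1, f2]
  have s7 : a*N < (2+a)*P := lt_of_mul_lt_mul_right s7' hα'.le
  have hP0 : 0 < P := by nlinarith [s7, mul_nonneg ha.le hN]
  have g2 : ε*(N+P)*a < ε*(2+2*a)*P := by nlinarith [mul_lt_mul_of_pos_left s7 hε0]
  have g3 : ε*((2+2*a)*P*α') ≤ (d*a*c/4)*P := by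
    have hge : (0:ℝ) ≤ (2+2*a)*P*α' := by positivity
    have h := mul_le_mul_of_nonneg_right hε3 hge
    have e3 : (d*a*c/(8*α'*(1+a)))*((2+2*a)*P*α') = (d*a*c/4)*P := by
      field_simp; ring
    linarith [e3 ▸ h]
  have g4 : (d*a*c/4)*P < a*d*(α'*(P - a*N)) := by
    have h := mul_lt_mul_of_pos_left s8 (mul_pos ha hd0)
    nlinarith [h, mul_pos (mul_pos hd0 (mul_pos ha hc0)) hP0]
  have key : ε*(N+P) < d*(P - a*N) := by
    nlinarith [g2, g3, g4, mul_pos ha hα', hα']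
  -- conclude
  have hQβ : QI a m β ξ u < 0 := by
    have hdiff := QI_diff (a := a) (m := m) (β := β) (α' := α') (ξ := ξ) hu
    rw [hdiff]
    have : QI a m α' ξ u - (β - α')*P + a*(β-α')*N < ε*(N+P) - d*(P - a*N) := by
      rw [hddef]; linarith [hQ]
    linarith [key]
  have hmem : QI a m β ξ u / nR u ∈
      {r : ℝ | ∃ u : ℝ → ℝ, MemB1 u ∧ nR u ≠ 0 ∧ r = QI a m β ξ u / nR u} :=
    ⟨u, hu, hn, rfl⟩
  have hμξ : mu1 a m β ξ < 0 := by
    rw [mu1]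
    have hβ0 : 0 ≤ β := by linarith
    calc sInf _ ≤ QI a m β ξ u / nR u := csInf_le (bddBelow_S ha.le hm hβ0) hmem
    _ < 0 := div_neg_of_neg_of_pos hQβ hnpos
  calc sInf (Set.range (mu1 a m β))
      ≤ mu1 a m β ξ := csInf_le (bddBelow_range_mu1 ha.le hm (by linarith)) ⟨ξ, rfl⟩
  _ < 0 := hμξ

lemma Theta0_nonneg : 0 ≤ Theta0 := by
  rw [Theta0]
  apply Real.sInf_nonneg
  rintro x ⟨ξ, rfl⟩
  rw [lambda1N, lambda1]
  apply Real.sInf_nonneg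
  rintro r ⟨u, hu, hn, rfl⟩
  have h1 : 0 ≤ qRobin 0 ξ u := by
    rw [qRobin]
    have := intX_nonneg (u := u) (ξ := ξ) (Ioi 0) measurableSet_Ioi
    simp only [zero_mul, add_zero]
    exact this
  have h2 : 0 ≤ np u := setIntegral_nonneg measurableSet_Ioi (fun _ _ => sq_nonneg _)
  exact div_nonneg h1 h2

end Test5
/-- if `m > 1`, `α ∈ (Θ₀,1)` and `inf_ξ μ₁(a,m,α;ξ) = 0`, then for
every `β > α` one has `inf_ξ μ₁(a,m,β;ξ) < 0`; consequently `α` is the only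
positive value for which the infimum vanishes. -/
theorem inf_mu1_neg_of_gt (a m α : ℝ) (ha : 0 < a) (hm : 1 < m)
    (hα : α ∈ Ioo Theta0 1)
    (h0 : sInf (Set.range (mu1 a m α)) = 0) :
    (∀ β : ℝ, α < β → sInf (Set.range (mu1 a m β)) < 0) ∧
    (∀ α' : ℝ, 0 < α' → sInf (Set.range (mu1 a m α')) = 0 → α' = α) := by
  have hm0 : 0 < m := lt_trans one_pos hm
  have hα0 : 0 < α := lt_of_le_of_lt Theta0_nonneg hα.1
  constructor
  · intro β hβ
    exact core_lemma a m α β ha hm0 hα0 hβ h0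
  · intro α' hα' h0'
    rcases lt_trichotomy α' α with h | h | h
    · exact absurd h0 (ne_of_lt (core_lemma a m α' α ha hm0 hα' h h0'))
    · exact h
    · exact absurd h0' (ne_of_lt (core_lemma a m α α' ha hm0 hα0 h h0))
end
end
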